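/- For every τ ∈ ℝ and x > 0, (K_{iτ}(x))² = (1/2)·∫_0^∞ exp(−t − x²/(2t))·K_{iτ}(t)·(dt/t). -/
import Mathlib

set_option maxHeartbeats 1000000

open MeasureTheory Real Set

/-- Macdonald function of purely imaginary order `iτ`. -/
noncomputable def Kit (τ x : ℝ) : ℝ :=
  ∫ u in Set.Ioi (0:ℝ), Real.exp (-x * Real.cosh u) * Real.cos (τ * u)


lemma quad_le_cosh (u : ℝ) : 1 + u^2/2 ≤ Real.cosh u := by
  have h2 : Real.cosh u = 1 + 2 * Real.sinh (u/2)^2 := by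
    have hu : u = 2*(u/2) := by ring
    rw [hu, Real.cosh_two_mul]
    have hs : 2*(u/2)/2 = u/2 := by ring
    rw [hs]
    nlinarith [Real.cosh_sq (u/2)]
  have h : (u/2)^2 ≤ Real.sinh (u/2)^2 := by
    rcases le_or_gt 0 u with h0 | h0
    · have := Real.self_le_sinh_iff.2 (by linarith : (0:ℝ) ≤ u/2)
      nlinarith
    · have := Real.sinh_le_self_iff.2 (by linarith : u/2 ≤ 0)
      nlinarith
  nlinarith

lemma even_integral (f : ℝ → ℝ) (hf : ∀ u, f (-u) = f u) :
    ∫ u, f u = 2 * ∫ u in Ioi (0:ℝ), f u := by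
  rw [← integral_comp_abs (f := f)]
  congr 1; ext u
  rcases abs_choice u with h | h <;> rw [h]
  exact (hf u).symm

lemma cosh_mul_bound (a b : ℝ) : Real.cosh a + Real.cosh b ≤ 2 * (Real.cosh a * Real.cosh b) := by
  nlinarith [Real.one_le_cosh a, Real.one_le_cosh b]

lemma exp_div_le (c t : ℝ) (hc : 0 < c) (ht : 0 < t) : Real.exp (-(c/t)) / t ≤ 1/c := by
  have h : c/t ≤ Real.exp (c/t) := le_trans (by linarith [div_nonneg hc.le ht.le]) (Real.add_one_le_exp _)
  have key : c ≤ Real.exp (c/t) * t := by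
    rw [← div_le_iff₀ ht]; exact h
  rw [Real.exp_neg, div_le_div_iff₀ ht hc, inv_mul_eq_div, one_mul,
    div_le_iff₀ (Real.exp_pos _)]
  nlinarith [Real.exp_pos (c/t), ht]

lemma f0_integrable {x : ℝ} (hx : 0 < x) :
    Integrable (fun u => Real.exp (-x * Real.cosh u)) := by
  have : Integrable (fun u : ℝ => Real.exp (-x) * Real.exp (-(x/2) * u^2)) :=
    (integrable_exp_neg_mul_sq (by positivity)).const_mul _
  refine this.mono' (Real.continuous_exp.comp (continuous_const.mul Real.continuous_cosh)).aestronglyMeasurable ?_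
  filter_upwards with u
  rw [norm_of_nonneg (Real.exp_pos _).le, ← Real.exp_add]
  apply Real.exp_le_exp.2
  nlinarith [quad_le_cosh u]

lemma exp_image_Ioi {c : ℝ} (hc : 0 < c) :
    (fun s : ℝ => c * Real.exp s) '' univ = Ioi 0 := by
  ext y
  constructor
  · rintro ⟨s, -, rfl⟩
    exact mul_pos hc (Real.exp_pos s)
  · intro hy
    refine ⟨Real.log (y / c), mem_univ _, ?_⟩
    show c * Real.exp (Real.log (y/c)) = y
    rw [Real.exp_log (div_pos hy hc), mul_div_cancel₀ _ hc.ne']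

/-- Key substitution `t = c e^s` with `c = √(b/a)`. -/
lemma integral_exp_sub (a b : ℝ) (ha : 0 < a) (hb : 0 < b) :
    ∫ t in Ioi (0:ℝ), Real.exp (-(a*t) - b/t) / t
      = ∫ s : ℝ, Real.exp (-(2 * Real.sqrt (a*b)) * Real.cosh s) := by
  set c : ℝ := Real.sqrt b / Real.sqrt a with hcdef
  have hsa : 0 < Real.sqrt a := Real.sqrt_pos.2 ha
  have hsb : 0 < Real.sqrt b := Real.sqrt_pos.2 hb
  have hc : 0 < c := div_pos hsb hsa
  have hderiv : ∀ s ∈ (univ : Set ℝ),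
      HasDerivWithinAt (fun s => c * Real.exp s) (c * Real.exp s) univ s :=
    fun s _ => ((Real.hasDerivAt_exp s).const_mul c).hasDerivWithinAt
  have hinj : InjOn (fun s => c * Real.exp s) univ := by
    intro s _ t _ h
    simpa using mul_left_cancel₀ hc.ne' h |> Real.exp_injective
  have := integral_image_eq_integral_abs_deriv_smul (MeasurableSet.univ) hderiv hinj
    (fun t => Real.exp (-(a*t) - b/t) / t)
  rw [exp_image_Ioi hc] at this
  rw [this, Measure.restrict_univ]
  congr 1
  ext s
  have hce : 0 < c * Real.exp s := mul_pos hc (Real.exp_pos s)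
  rw [abs_of_pos hce, smul_eq_mul]
  rw [mul_div_assoc']  -- (c*exp s) * (exp(..)/(c*exp s))? need care
  rw [mul_div_cancel_left₀ _ hce.ne']
  congr 1
  have hac : a * c = Real.sqrt (a*b) := by
    rw [hcdef, Real.sqrt_mul ha.le]
    field_simp
    nlinarith [Real.sq_sqrt ha.le, Real.sq_sqrt hb.le]
  have hbc : b / c = Real.sqrt (a*b) := by
    rw [hcdef, Real.sqrt_mul ha.le]
    field_simp
    nlinarith [Real.sq_sqrt ha.le, Real.sq_sqrt hb.le]
  have h1 : a * (c * Real.exp s) = Real.sqrt (a*b) * Real.exp s := by rw [← mul_assoc, hac]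
  have h2 : b / (c * Real.exp s) = Real.sqrt (a*b) * Real.exp (-s) := by
    rw [div_mul_eq_div_div, hbc, Real.exp_neg, div_eq_mul_inv]
  rw [h1, h2, Real.cosh_eq]
  ring

lemma master_plain {x : ℝ} (hx : 0 < x) {c : ℝ × ℝ → ℝ}
    (hc : AEStronglyMeasurable c ((volume : Measure ℝ).prod volume))
    (hb : ∀ p, |c p| ≤ 1) :
    Integrable (fun p : ℝ × ℝ =>
        Real.exp (-(2*x) * (Real.cosh p.1 * Real.cosh p.2)) * c p)
      ((volume : Measure ℝ).prod volume) := by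
  have hD : Integrable (fun p : ℝ × ℝ =>
      Real.exp (-x * Real.cosh p.1) * Real.exp (-x * Real.cosh p.2))
      ((volume : Measure ℝ).prod volume) :=
    (f0_integrable hx).mul_prod (f0_integrable hx)
  refine hD.mono' (AEStronglyMeasurable.mul ?_ hc) ?_
  · exact (Real.continuous_exp.comp
      ((continuous_const.mul ((Real.continuous_cosh.comp continuous_fst).mul
        (Real.continuous_cosh.comp continuous_snd))))).aestronglyMeasurable
  · filter_upwards with p
    rw [norm_mul, norm_of_nonneg (Real.exp_pos _).le]
    calc Real.exp (-(2*x) * (Real.cosh p.1 * Real.cosh p.2)) * ‖c p‖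
        ≤ Real.exp (-(2*x) * (Real.cosh p.1 * Real.cosh p.2)) * 1 := by
          exact mul_le_mul_of_nonneg_left (by simpa using hb p) (Real.exp_pos _).le
      _ ≤ Real.exp (-x * Real.cosh p.1) * Real.exp (-x * Real.cosh p.2) := by
          rw [mul_one, ← Real.exp_add]
          apply Real.exp_le_exp.2
          nlinarith [cosh_mul_bound p.1 p.2]

lemma master_shear {x : ℝ} (hx : 0 < x) {c : ℝ × ℝ → ℝ}
    (hc : AEStronglyMeasurable c ((volume : Measure ℝ).prod volume))
    (hb : ∀ p, |c p| ≤ 1) :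
    Integrable (fun p : ℝ × ℝ =>
        Real.exp (-(2*x) * (Real.cosh (p.1 - p.2) * Real.cosh p.2)) * c p)
      ((volume : Measure ℝ).prod volume) := by
  have hDmeas : AEStronglyMeasurable (fun p : ℝ × ℝ =>
      Real.exp (-x * Real.cosh p.1) * Real.exp (-x * Real.cosh p.2))
      ((volume : Measure ℝ).prod volume) :=
    ((Real.continuous_exp.comp (continuous_const.mul
        (Real.continuous_cosh.comp continuous_fst))).mul
      (Real.continuous_exp.comp (continuous_const.mul
        (Real.continuous_cosh.comp continuous_snd)))).aestronglyMeasurable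
  have hD0 : Integrable (fun p : ℝ × ℝ =>
      Real.exp (-x * Real.cosh p.1) * Real.exp (-x * Real.cosh p.2))
      ((volume : Measure ℝ).prod volume) :=
    (f0_integrable hx).mul_prod (f0_integrable hx)
  have hD : Integrable (fun p : ℝ × ℝ =>
      Real.exp (-x * Real.cosh (p.1 - p.2)) * Real.exp (-x * Real.cosh p.2))
      ((volume : Measure ℝ).prod volume) := by
    have := (measurePreserving_sub_prod (volume : Measure ℝ) volume).integrable_comp hDmeas
    exact this.2 hD0
  refine hD.mono' (AEStronglyMeasurable.mul ?_ hc) ?_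
  · exact (Real.continuous_exp.comp
      ((continuous_const.mul ((Real.continuous_cosh.comp (continuous_fst.sub continuous_snd)).mul
        (Real.continuous_cosh.comp continuous_snd))))).aestronglyMeasurable
  · filter_upwards with p
    rw [norm_mul, norm_of_nonneg (Real.exp_pos _).le]
    calc Real.exp (-(2*x) * (Real.cosh (p.1-p.2) * Real.cosh p.2)) * ‖c p‖
        ≤ Real.exp (-(2*x) * (Real.cosh (p.1-p.2) * Real.cosh p.2)) * 1 :=
          mul_le_mul_of_nonneg_left (by simpa using hb p) (Real.exp_pos _).le
      _ ≤ Real.exp (-x * Real.cosh (p.1-p.2)) * Real.exp (-x * Real.cosh p.2) := by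
          rw [mul_one, ← Real.exp_add]
          apply Real.exp_le_exp.2
          nlinarith [cosh_mul_bound (p.1-p.2) p.2]

noncomputable def Phi (x w : ℝ) : ℝ :=
  ∫ s : ℝ, Real.exp (-(2*x) * (Real.cosh w * Real.cosh s))

lemma Phi_eq (x w : ℝ) : Phi x w = ∫ s : ℝ, Real.exp (-(2*x) * (Real.cosh w * Real.cosh s)) := rfl

lemma int_ext {f g : ℝ → ℝ} (h : ∀ u, f u = g u) : ∫ u, f u = ∫ u, g u :=
  integral_congr_ae (Filter.Eventually.of_forall h)

lemma int_extS {f g : ℝ → ℝ} (h : ∀ u, f u = g u) :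
    ∫ u in Ioi (0:ℝ), f u = ∫ u in Ioi (0:ℝ), g u :=
  integral_congr_ae (Filter.Eventually.of_forall h)

lemma cosh_sum (u s : ℝ) :
    Real.cosh u + Real.cosh (u - 2*s) = 2*(Real.cosh (u-s) * Real.cosh s) := by
  have key : ∀ p q : ℝ, Real.cosh (p+q) + Real.cosh (p-q) = 2*(Real.cosh p * Real.cosh q) := by
    intro p q; rw [Real.cosh_add, Real.cosh_sub]; ring
  have h := key (u-s) s
  rw [show (u-s)+s = u from by ring, show (u-s)-s = u-2*s from by ring] at h
  exact h

lemma cos_prod (a b : ℝ) :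
    Real.cos (a+b) * Real.cos (a-b) = (Real.cos (2*a) + Real.cos (2*b))/2 := by
  rw [Real.cos_add, Real.cos_sub, Real.cos_two_mul, Real.cos_two_mul]
  linear_combination (-(Real.sin b)^2) * Real.sin_sq_add_cos_sq a
    + (Real.cos a^2 - 1) * Real.sin_sq_add_cos_sq b

lemma comp_affine (g : ℝ → ℝ) (u : ℝ) : ∫ v : ℝ, g v = 2 * ∫ s : ℝ, g (u - 2*s) := by
  have h1 : (∫ s : ℝ, g (u - 2*s)) = |((-2:ℝ))⁻¹| • ∫ s : ℝ, g (u + s) := by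
    have h := MeasureTheory.Measure.integral_comp_mul_left (fun t => g (u + t)) (-2)
    simp_rw [show ∀ s:ℝ, u - 2*s = u + (-2)*s from fun s => by ring]
    exact h
  rw [MeasureTheory.integral_add_left_eq_self] at h1
  have habs : |((-2:ℝ))⁻¹| = 1/2 := by rw [abs_inv, abs_neg]; norm_num
  rw [h1, habs, smul_eq_mul]; ring

lemma int_w {x : ℝ} (hx : 0 < x) (s : ℝ) (c : ℝ → ℝ)
    (hc : AEStronglyMeasurable c volume) (hb : ∀ w, |c w| ≤ 1) :
    Integrable (fun w => Real.exp (-(2*x) * (Real.cosh s * Real.cosh w)) * c w) := by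
  refine (f0_integrable hx).mono'
    ((Real.continuous_exp.comp (continuous_const.mul
      (continuous_const.mul Real.continuous_cosh))).aestronglyMeasurable.mul hc) ?_
  filter_upwards with w
  rw [norm_mul, norm_of_nonneg (Real.exp_pos _).le]
  have h1 : ‖c w‖ ≤ 1 := by simpa using hb w
  calc Real.exp (-(2*x) * (Real.cosh s * Real.cosh w)) * ‖c w‖
      ≤ Real.exp (-(2*x) * (Real.cosh s * Real.cosh w)) * 1 :=
        mul_le_mul_of_nonneg_left h1 (Real.exp_pos _).le
    _ ≤ Real.exp (-x * Real.cosh w) := by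
        rw [mul_one]
        apply Real.exp_le_exp.2
        have hxc : 0 ≤ x * Real.cosh w := mul_nonneg hx.le (Real.cosh_pos w).le
        nlinarith [mul_le_mul_of_nonneg_left (Real.one_le_cosh s) hxc]

lemma lhs_eq (τ x : ℝ) (hx : 0 < x) :
    4 * (Kit τ x)^2 = 2 * ∫ s : ℝ, Real.cos (τ*(2*s)) * Phi x s := by
  set f : ℝ → ℝ := fun u => Real.exp (-x * Real.cosh u) * Real.cos (τ * u) with hf
  have hfeven : ∀ u, f (-u) = f u := by
    intro u; simp only [hf, Real.cosh_neg, mul_neg, Real.cos_neg]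
  have hKit : 2 * Kit τ x = ∫ u, f u := (even_integral f hfeven).symm
  have sq4 : 4 * (Kit τ x)^2 = (∫ u, f u) * (∫ v, f v) := by rw [← hKit]; ring
  have step1 : (∫ u, f u) * (∫ v, f v) = ∫ u, ∫ v, f u * f v := by
    rw [← integral_mul_const]
    exact int_ext fun u => (integral_const_mul _ _).symm
  have step2 : ∀ u, (∫ v, f u * f v)
      = ∫ s, 2 * (Real.exp (-(2*x) * (Real.cosh s * Real.cosh (u-s)))
          * (Real.cos (τ*u) * Real.cos (τ*(u - 2*s)))) := by
    intro u
    rw [comp_affine (fun v => f u * f v) u, ← integral_const_mul]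
    refine int_ext fun s => ?_
    simp only [hf]
    have hexp : -x * Real.cosh u + -x * Real.cosh (u - 2*s)
        = -(2*x) * (Real.cosh s * Real.cosh (u-s)) := by
      linear_combination (-x) * cosh_sum u s
    rw [mul_mul_mul_comm, ← Real.exp_add, hexp]
  have hcont1 : Continuous fun p : ℝ × ℝ => Real.cos (τ*p.1) * Real.cos (τ*(p.1 - 2*p.2)) := by
    fun_prop
  have hG : Integrable (Function.uncurry fun u s =>
      2 * (Real.exp (-(2*x) * (Real.cosh s * Real.cosh (u-s)))
        * (Real.cos (τ*u) * Real.cos (τ*(u - 2*s)))))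
      ((volume : Measure ℝ).prod volume) := by
    have h := (master_shear hx hcont1.aestronglyMeasurable (fun p => by
      rw [abs_mul]
      exact mul_le_one₀ (Real.abs_cos_le_one _) (abs_nonneg _) (Real.abs_cos_le_one _))).const_mul 2
    refine h.congr (Filter.Eventually.of_forall fun p => ?_)
    simp only [Function.uncurry]
    rw [mul_comm (Real.cosh (p.1 - p.2)) (Real.cosh p.2)]
  have step3 : (∫ u, ∫ s, 2 * (Real.exp (-(2*x) * (Real.cosh s * Real.cosh (u-s)))
          * (Real.cos (τ*u) * Real.cos (τ*(u - 2*s)))))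
      = ∫ s, ∫ u, 2 * (Real.exp (-(2*x) * (Real.cosh s * Real.cosh (u-s)))
          * (Real.cos (τ*u) * Real.cos (τ*(u - 2*s)))) :=
    integral_integral_swap hG
  have step4 : ∀ s, (∫ u, 2 * (Real.exp (-(2*x) * (Real.cosh s * Real.cosh (u-s)))
          * (Real.cos (τ*u) * Real.cos (τ*(u - 2*s)))))
      = ∫ w, Real.exp (-(2*x) * (Real.cosh s * Real.cosh w))
          * (Real.cos (τ*(2*w)) + Real.cos (τ*(2*s))) := by
    intro s
    rw [← MeasureTheory.integral_add_right_eq_self (fun u =>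
      2 * (Real.exp (-(2*x) * (Real.cosh s * Real.cosh (u-s)))
        * (Real.cos (τ*u) * Real.cos (τ*(u - 2*s))))) s]
    refine int_ext fun w => ?_
    rw [show w + s - s = w from by ring, show w + s - 2*s = w - s from by ring,
      show τ*(w+s) = τ*w + τ*s from by ring, show τ*(w-s) = τ*w - τ*s from by ring,
      cos_prod, show 2*(τ*w) = τ*(2*w) from by ring, show 2*(τ*s) = τ*(2*s) from by ring]
    ring
  have hcont2 : Continuous fun p : ℝ × ℝ => Real.cos (τ*(2*p.2)) := by fun_prop
  have hcont3 : Continuous fun p : ℝ × ℝ => Real.cos (τ*(2*p.1)) := by fun_prop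
  have hI1 : Integrable (fun p : ℝ × ℝ =>
      Real.exp (-(2*x) * (Real.cosh p.1 * Real.cosh p.2)) * Real.cos (τ*(2*p.2)))
      ((volume : Measure ℝ).prod volume) :=
    master_plain hx hcont2.aestronglyMeasurable (fun p => Real.abs_cos_le_one _)
  have hI2 : Integrable (fun p : ℝ × ℝ =>
      Real.exp (-(2*x) * (Real.cosh p.1 * Real.cosh p.2)) * Real.cos (τ*(2*p.1)))
      ((volume : Measure ℝ).prod volume) :=
    master_plain hx hcont3.aestronglyMeasurable (fun p => Real.abs_cos_le_one _)
  have inner5 : ∀ s, (∫ w, Real.exp (-(2*x) * (Real.cosh s * Real.cosh w))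
          * (Real.cos (τ*(2*w)) + Real.cos (τ*(2*s))))
      = (∫ w, Real.exp (-(2*x) * (Real.cosh s * Real.cosh w)) * Real.cos (τ*(2*w)))
        + Real.cos (τ*(2*s)) * Phi x s := by
    intro s
    have ha : Integrable (fun w => Real.exp (-(2*x) * (Real.cosh s * Real.cosh w))
        * Real.cos (τ*(2*w))) :=
      int_w hx s _ (by fun_prop : Continuous fun w : ℝ => Real.cos (τ*(2*w))).aestronglyMeasurable
        (fun w => Real.abs_cos_le_one _)
    have hb : Integrable (fun w => Real.exp (-(2*x) * (Real.cosh s * Real.cosh w))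
        * Real.cos (τ*(2*s))) :=
      int_w hx s _ aestronglyMeasurable_const (fun w => Real.abs_cos_le_one _)
    rw [show (fun w => Real.exp (-(2*x) * (Real.cosh s * Real.cosh w))
          * (Real.cos (τ*(2*w)) + Real.cos (τ*(2*s))))
        = (fun w => Real.exp (-(2*x) * (Real.cosh s * Real.cosh w)) * Real.cos (τ*(2*w))
          + Real.exp (-(2*x) * (Real.cosh s * Real.cosh w)) * Real.cos (τ*(2*s)))
      from funext fun w => by ring]
    rw [integral_add ha hb, integral_mul_const, mul_comm (∫ w, Real.exp (-(2*x) * (Real.cosh s * Real.cosh w))) (Real.cos (τ*(2*s))), Phi_eq]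
  have h1' : Integrable (fun s => ∫ w,
      Real.exp (-(2*x) * (Real.cosh s * Real.cosh w)) * Real.cos (τ*(2*w))) := by
    have h := hI1.integral_prod_left
    simpa only [] using h
  have h2' : Integrable (fun s => Real.cos (τ*(2*s)) * Phi x s) := by
    have h := hI2.integral_prod_left
    refine h.congr (Filter.Eventually.of_forall fun s => ?_)
    simp only
    rw [integral_mul_const, mul_comm, Phi_eq]
  have step5 : (∫ s, ∫ w, Real.exp (-(2*x) * (Real.cosh s * Real.cosh w))
          * (Real.cos (τ*(2*w)) + Real.cos (τ*(2*s))))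
      = (∫ s, ∫ w, Real.exp (-(2*x) * (Real.cosh s * Real.cosh w)) * Real.cos (τ*(2*w)))
        + ∫ s, Real.cos (τ*(2*s)) * Phi x s := by
    rw [int_ext inner5]
    exact integral_add h1' h2'
  have step6 : (∫ s, ∫ w, Real.exp (-(2*x) * (Real.cosh s * Real.cosh w)) * Real.cos (τ*(2*w)))
      = ∫ s, Real.cos (τ*(2*s)) * Phi x s := by
    have hswap : (∫ s, ∫ w, Real.exp (-(2*x) * (Real.cosh s * Real.cosh w)) * Real.cos (τ*(2*w)))
        = ∫ w, ∫ s, Real.exp (-(2*x) * (Real.cosh s * Real.cosh w)) * Real.cos (τ*(2*w)) :=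
      integral_integral_swap (hI1.congr (Filter.Eventually.of_forall fun p => rfl))
    rw [hswap]
    refine int_ext fun w => ?_
    rw [integral_mul_const, mul_comm, Phi_eq]
    congr 1
    exact int_ext fun s => by rw [mul_comm (Real.cosh s) (Real.cosh w)]
  calc 4 * (Kit τ x)^2 = (∫ u, f u) * (∫ v, f v) := sq4
    _ = ∫ u, ∫ v, f u * f v := step1
    _ = ∫ u, ∫ s, 2 * (Real.exp (-(2*x) * (Real.cosh s * Real.cosh (u-s)))
          * (Real.cos (τ*u) * Real.cos (τ*(u - 2*s)))) := int_ext step2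
    _ = ∫ s, ∫ u, 2 * (Real.exp (-(2*x) * (Real.cosh s * Real.cosh (u-s)))
          * (Real.cos (τ*u) * Real.cos (τ*(u - 2*s)))) := step3
    _ = ∫ s, ∫ w, Real.exp (-(2*x) * (Real.cosh s * Real.cosh w))
          * (Real.cos (τ*(2*w)) + Real.cos (τ*(2*s))) := int_ext step4
    _ = (∫ s, ∫ w, Real.exp (-(2*x) * (Real.cosh s * Real.cosh w)) * Real.cos (τ*(2*w)))
        + ∫ s, Real.cos (τ*(2*s)) * Phi x s := step5
    _ = 2 * ∫ s : ℝ, Real.cos (τ*(2*s)) * Phi x s := by rw [step6]; ring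

lemma sqrt_ab (x u : ℝ) (hx : 0 < x) :
    Real.sqrt ((1 + Real.cosh u) * (x^2/2)) = x * Real.cosh (u/2) := by
  obtain ⟨v, rfl⟩ : ∃ v, u = 2*v := ⟨u/2, by ring⟩
  rw [show 2*v/2 = v from by ring]
  have h1 : 1 + Real.cosh (2*v) = 2 * Real.cosh v^2 := by
    rw [Real.cosh_two_mul]
    nlinarith [Real.cosh_sq v]
  rw [h1, show 2 * Real.cosh v^2 * (x^2/2) = (x*Real.cosh v)^2 from by ring,
    Real.sqrt_sq (by positivity)]

lemma rhs_master (τ x : ℝ) (hx : 0 < x) :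
    Integrable (fun p : ℝ × ℝ =>
        (Real.exp (-p.1 - x^2/(2*p.1))/p.1) * (Real.exp (-p.1 * Real.cosh p.2) * Real.cos (τ*p.2)))
      (((volume : Measure ℝ).restrict (Ioi 0)).prod ((volume : Measure ℝ).restrict (Ioi 0))) := by
  have hmeas : AEStronglyMeasurable (fun p : ℝ × ℝ =>
      (Real.exp (-p.1 - x^2/(2*p.1))/p.1) * (Real.exp (-p.1 * Real.cosh p.2) * Real.cos (τ*p.2)))
      (((volume : Measure ℝ).restrict (Ioi 0)).prod ((volume : Measure ℝ).restrict (Ioi 0))) := by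
    apply Measurable.aestronglyMeasurable
    apply Measurable.mul
    · exact (Real.measurable_exp.comp (measurable_fst.neg.sub
        (measurable_const.div (measurable_const.mul measurable_fst)))).div measurable_fst
    · exact (Real.measurable_exp.comp ((measurable_fst.neg).mul
        (Real.continuous_cosh.measurable.comp measurable_snd))).mul
        (Real.measurable_cos.comp (measurable_const.mul measurable_snd))
  have hdom : Integrable (fun p : ℝ × ℝ =>
      ((4/x^2) * Real.exp (-1 * p.1)) * Real.exp (-(x/2) * p.2))
      (((volume : Measure ℝ).restrict (Ioi 0)).prod ((volume : Measure ℝ).restrict (Ioi 0))) :=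
    ((exp_neg_integrableOn_Ioi 0 one_pos).const_mul (4/x^2)).mul_prod
      (exp_neg_integrableOn_Ioi 0 (by positivity))
  refine hdom.mono' hmeas ?_
  rw [Measure.prod_restrict, ae_restrict_iff' (measurableSet_Ioi.prod measurableSet_Ioi)]
  refine Filter.Eventually.of_forall fun p hp => ?_
  obtain ⟨ht, hu⟩ := hp
  simp only [mem_Ioi] at ht hu
  set t := p.1
  set u := p.2
  have e_split : Real.exp (-t - x^2/(2*t))
      = Real.exp (-t) * (Real.exp (-(x^2/4/t)) * Real.exp (-(x^2/4/t))) := by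
    rw [← Real.exp_add, ← Real.exp_add]
    congr 1
    field_simp
    ring
  have h1 : Real.exp (-(x^2/4/t))/t ≤ 4/x^2 := by
    have h := exp_div_le (x^2/4) t (by positivity) ht
    calc Real.exp (-(x^2/4/t))/t ≤ 1/(x^2/4) := h
      _ = 4/x^2 := by field_simp
  have h2 : Real.exp (-(x^2/4/t)) * Real.exp (-t * Real.cosh u) ≤ Real.exp (-(x/2) * u) := by
    rw [← Real.exp_add]
    apply Real.exp_le_exp.2
    have h3 : t * (u^2/2) ≤ t * Real.cosh u :=
      mul_le_mul_of_nonneg_left (le_trans (by nlinarith) (quad_le_cosh u)) ht.le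
    have h4 : (x/2)*u - t*(u^2/2) ≤ (x^2/4)/t := by
      rw [le_div_iff₀ ht]
      nlinarith [sq_nonneg (u*t - x/2)]
    linarith [h3, h4]
  calc ‖(Real.exp (-t - x^2/(2*t))/t) * (Real.exp (-t * Real.cosh u) * Real.cos (τ*u))‖
      = (Real.exp (-t - x^2/(2*t))/t) * (Real.exp (-t * Real.cosh u) * |Real.cos (τ*u)|) := by
        rw [norm_mul, norm_mul, norm_of_nonneg (by positivity),
          norm_of_nonneg (Real.exp_pos _).le, Real.norm_eq_abs]
    _ ≤ (Real.exp (-t - x^2/(2*t))/t) * (Real.exp (-t * Real.cosh u) * 1) := by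
        apply mul_le_mul_of_nonneg_left _ (by positivity)
        exact mul_le_mul_of_nonneg_left (Real.abs_cos_le_one _) (Real.exp_pos _).le
    _ = (Real.exp (-t) * (Real.exp (-(x^2/4/t))/t))
        * (Real.exp (-(x^2/4/t)) * Real.exp (-t * Real.cosh u)) := by
        rw [e_split]; ring
    _ ≤ (Real.exp (-t) * (4/x^2)) * Real.exp (-(x/2) * u) := by
        apply mul_le_mul _ h2 (by positivity) (by positivity)
        exact mul_le_mul_of_nonneg_left h1 (Real.exp_pos _).le
    _ = ((4/x^2) * Real.exp (-1 * p.1)) * Real.exp (-(x/2) * p.2) := by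
        rw [neg_one_mul]; ring

lemma Phi_even (x s : ℝ) : Phi x (-s) = Phi x s := by
  rw [Phi_eq, Phi_eq, Real.cosh_neg]

lemma rhs_eq (τ x : ℝ) (hx : 0 < x) :
    (∫ t in Ioi (0:ℝ), Real.exp (-t - x^2 / (2*t)) * Kit τ t / t)
      = ∫ s : ℝ, Real.cos (τ*(2*s)) * Phi x s := by
  -- Step 1: expand Kit and pull the t-factors inside
  have step1 : (∫ t in Ioi (0:ℝ), Real.exp (-t - x^2 / (2*t)) * Kit τ t / t)
      = ∫ t in Ioi (0:ℝ), ∫ u in Ioi (0:ℝ),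
          (Real.exp (-t - x^2/(2*t))/t) * (Real.exp (-t * Real.cosh u) * Real.cos (τ*u)) := by
    refine int_extS fun t => ?_
    rw [Kit, show Real.exp (-t - x^2 / (2*t)) * (∫ u in Ioi (0:ℝ),
        Real.exp (-t * Real.cosh u) * Real.cos (τ * u)) / t
        = (Real.exp (-t - x^2/(2*t))/t) * ∫ u in Ioi (0:ℝ),
            Real.exp (-t * Real.cosh u) * Real.cos (τ * u) from by ring,
      ← integral_const_mul]
  -- Step 2: Fubini
  have step2 : (∫ t in Ioi (0:ℝ), ∫ u in Ioi (0:ℝ),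
          (Real.exp (-t - x^2/(2*t))/t) * (Real.exp (-t * Real.cosh u) * Real.cos (τ*u)))
      = ∫ u in Ioi (0:ℝ), ∫ t in Ioi (0:ℝ),
          (Real.exp (-t - x^2/(2*t))/t) * (Real.exp (-t * Real.cosh u) * Real.cos (τ*u)) :=
    integral_integral_swap
      ((rhs_master τ x hx).congr (Filter.Eventually.of_forall fun p => rfl))
  -- Step 3: inner integral evaluation
  have step3 : ∀ u, (∫ t in Ioi (0:ℝ),
          (Real.exp (-t - x^2/(2*t))/t) * (Real.exp (-t * Real.cosh u) * Real.cos (τ*u)))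
      = Real.cos (τ*u) * Phi x (u/2) := by
    intro u
    have hrw : ∀ t : ℝ, (Real.exp (-t - x^2/(2*t))/t)
          * (Real.exp (-t * Real.cosh u) * Real.cos (τ*u))
        = Real.cos (τ*u) * (Real.exp (-((1 + Real.cosh u)*t) - (x^2/2)/t) / t) := by
      intro t
      have hexp : Real.exp (-t - x^2/(2*t)) * Real.exp (-t * Real.cosh u)
          = Real.exp (-((1 + Real.cosh u)*t) - (x^2/2)/t) := by
        rw [← Real.exp_add]
        congr 1
        field_simp
        ring
      calc (Real.exp (-t - x^2/(2*t))/t) * (Real.exp (-t * Real.cosh u) * Real.cos (τ*u))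
          = Real.cos (τ*u) * ((Real.exp (-t - x^2/(2*t)) * Real.exp (-t * Real.cosh u)) / t) := by
            ring
        _ = Real.cos (τ*u) * (Real.exp (-((1 + Real.cosh u)*t) - (x^2/2)/t) / t) := by
            rw [hexp]
    rw [int_extS hrw, integral_const_mul,
      integral_exp_sub (1 + Real.cosh u) (x^2/2)
        (by positivity) (by positivity)]
    congr 1
    rw [Phi_eq]
    refine integral_congr_ae (Filter.Eventually.of_forall fun s => ?_)
    rw [sqrt_ab x u hx]
    ring_nf
  -- Step 4: substitution u = 2w on (0,∞)
  have step4 : (∫ u in Ioi (0:ℝ), Real.cos (τ*u) * Phi x (u/2))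
      = 2 * ∫ w in Ioi (0:ℝ), Real.cos (τ*(2*w)) * Phi x w := by
    have h := integral_comp_mul_left_Ioi (fun u => Real.cos (τ*u) * Phi x (u/2)) 0
      (by norm_num : (0:ℝ) < 2)
    rw [mul_zero] at h
    have h2 : (∫ w in Ioi (0:ℝ), Real.cos (τ*(2*w)) * Phi x w)
        = (2:ℝ)⁻¹ • ∫ u in Ioi (0:ℝ), Real.cos (τ*u) * Phi x (u/2) := by
      rw [← h]
      exact int_extS fun w => by rw [show 2*w/2 = w from by ring]
    rw [h2, smul_eq_mul]
    ring
  -- Step 5: evenness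
  have step5 : (∫ s : ℝ, Real.cos (τ*(2*s)) * Phi x s)
      = 2 * ∫ s in Ioi (0:ℝ), Real.cos (τ*(2*s)) * Phi x s := by
    refine even_integral _ fun s => ?_
    rw [Phi_even, show τ*(2*(-s)) = -(τ*(2*s)) from by ring, Real.cos_neg]
  rw [step1, step2, int_extS step3, step4, step5]


theorem Kit_sq_integral (τ x : ℝ) (hx : 0 < x) :
    (Kit τ x) ^ 2
      = (1/2) * ∫ t in Set.Ioi (0:ℝ),
          Real.exp (-t - x^2 / (2*t)) * Kit τ t / t := by
  have h1 := lhs_eq τ x hx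
  have h2 := rhs_eq τ x hx
  rw [h2]
  nlinarith [h1]
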